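/- If the structure constants f satisfy the Jacobi identity, then in the jet algebra 𝒜 one has B_a E_a^{μν} = B_a^μ B_a^ν (sum over a) for all μ,ν; equivalently, the finite renormalizations satisfy N(T^{μν},T) = −N(T^μ,T^ν), where N(T^{μν},T) := −i B_a E_a^{μν} and N(T^μ,T^ν) := i B_a^μ B_a^ν. -/
import Mathlib


open scoped TensorProduct

noncomputable section

/-- Lorentz indices. -/
abbrev Idx : Type := Fin 4

/-- The Minkowski metric `η = diag(1,-1,-1,-1)`, as complex scalars. -/
def η (μ ν : Idx) : ℂ := if μ = ν then (if μ = 0 then 1 else -1) else 0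

/-- Even generators `v_{aμ;M}` of the jet algebra. -/
structure EvenGen (r : ℕ) : Type where
  a : Fin r
  μ : Idx
  M : Multiset Idx
deriving DecidableEq

/-- Odd generators of the jet algebra: `u_{a;M}` (`tilde = false`) and `ũ_{a;M}`
(`tilde = true`). -/
structure OddGen (r : ℕ) : Type where
  tilde : Bool
  a : Fin r
  M : Multiset Idx
deriving DecidableEq

/-- The jet algebra `𝒜` of pure Yang-Mills: the free ℤ₂-graded-commutative unital
ℂ-algebra on the even generators `v_{aμ;M}` and the odd generators `u_{a;M}`, `ũ_{a;M}`,
realized concretely as the tensor product of the commutative polynomial algebra on the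
even generators with the exterior algebra of the free ℂ-module on the odd generators. -/
abbrev Jet (r : ℕ) : Type :=
  MvPolynomial (EvenGen r) ℂ ⊗[ℂ] ExteriorAlgebra ℂ (OddGen r →₀ ℂ)

variable {r : ℕ}

/-- The generator `v_{aμ;M}` as an element of `𝒜`. -/
def vGen (a : Fin r) (μ : Idx) (M : Multiset Idx) : Jet r :=
  MvPolynomial.X ⟨a, μ, M⟩ ⊗ₜ[ℂ] 1

/-- The generator `u_{a;M}` as an element of `𝒜`. -/
def uGen (a : Fin r) (M : Multiset Idx) : Jet r :=
  1 ⊗ₜ[ℂ] ExteriorAlgebra.ι ℂ (Finsupp.single ⟨false, a, M⟩ (1 : ℂ))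

/-- The generator `ũ_{a;M}` as an element of `𝒜`. -/
def utGen (a : Fin r) (M : Multiset Idx) : Jet r :=
  1 ⊗ₜ[ℂ] ExteriorAlgebra.ι ℂ (Finsupp.single ⟨true, a, M⟩ (1 : ℂ))

/-- Data of the formal derivatives `d_ν`, the grading (parity) automorphism `σ`
(which is `+1` on even elements and `-1` on odd elements, so that the graded Leibniz
rule for the odd derivation `d_Q` can be written as `d_Q(xy) = (d_Q x) y + σ(x) d_Q y`),
and the gauge variation `d_Q`, together with their defining properties.
Since `𝒜` is generated by the generators, these properties determine `d_ν`, `σ`, `d_Q`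
uniquely. -/
structure DerData (r : ℕ) where
  /-- the formal derivative `d_ν` -/
  d : Idx → Jet r →ₗ[ℂ] Jet r
  /-- the parity automorphism -/
  σ : Jet r →ₐ[ℂ] Jet r
  /-- the gauge variation `d_Q` -/
  dQ : Jet r →ₗ[ℂ] Jet r
  d_mul : ∀ (ν : Idx) (x y : Jet r), d ν (x * y) = d ν x * y + x * d ν y
  d_v : ∀ (ν : Idx) (a : Fin r) (μ : Idx) (M : Multiset Idx),
    d ν (vGen a μ M) = vGen a μ (ν ::ₘ M)
  d_u : ∀ (ν : Idx) (a : Fin r) (M : Multiset Idx), d ν (uGen a M) = uGen a (ν ::ₘ M)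
  d_ut : ∀ (ν : Idx) (a : Fin r) (M : Multiset Idx), d ν (utGen a M) = utGen a (ν ::ₘ M)
  σ_v : ∀ (a : Fin r) (μ : Idx) (M : Multiset Idx), σ (vGen a μ M) = vGen a μ M
  σ_u : ∀ (a : Fin r) (M : Multiset Idx), σ (uGen a M) = - uGen a M
  σ_ut : ∀ (a : Fin r) (M : Multiset Idx), σ (utGen a M) = - utGen a M
  dQ_mul : ∀ x y : Jet r, dQ (x * y) = dQ x * y + σ x * dQ y
  dQ_v : ∀ (a : Fin r) (μ : Idx) (M : Multiset Idx),
    dQ (vGen a μ M) = Complex.I • uGen a (μ ::ₘ M)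
  dQ_u : ∀ (a : Fin r) (M : Multiset Idx), dQ (uGen a M) = 0
  dQ_ut : ∀ (a : Fin r) (M : Multiset Idx),
    dQ (utGen a M) = (-Complex.I) • ∑ ρ : Idx, ∑ s : Idx, η ρ s • vGen a ρ (s ::ₘ M)

/-- The wave-equation elements `η^{ρσ} ξ_{;M+{ρ,σ}}`, for `ξ` any generator. -/
def IsWave (w : Jet r) : Prop :=
  (∃ (a : Fin r) (μ : Idx) (M : Multiset Idx),
      w = ∑ ρ : Idx, ∑ s : Idx, η ρ s • vGen a μ (ρ ::ₘ s ::ₘ M)) ∨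
  (∃ (a : Fin r) (M : Multiset Idx),
      w = ∑ ρ : Idx, ∑ s : Idx, η ρ s • uGen a (ρ ::ₘ s ::ₘ M)) ∨
  (∃ (a : Fin r) (M : Multiset Idx),
      w = ∑ ρ : Idx, ∑ s : Idx, η ρ s • utGen a (ρ ::ₘ s ::ₘ M))

/-- The equations-of-motion ideal `I`: the two-sided ideal of `𝒜` generated by the
wave-equation elements (as a ℂ-subspace, the span of all `p * w * q` with `w` a
wave-equation element). -/
def eom (r : ℕ) : Submodule ℂ (Jet r) :=
  Submodule.span ℂ {x : Jet r | ∃ w p q : Jet r, IsWave w ∧ x = p * w * q}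

/-- The raised formal derivative `d^μ = η^{μν} d_ν`. -/
def dUp (D : DerData r) (μ : Idx) (x : Jet r) : Jet r := ∑ ν : Idx, η μ ν • D.d ν x

/-- `v_a^μ := η^{μν} v_{aν}`. -/
def vUp (a : Fin r) (μ : Idx) : Jet r := ∑ ν : Idx, η μ ν • vGen a ν 0

/-- The field strength `F_a^{μν} := d^μ v_a^ν - d^ν v_a^μ`. -/
def Fuu (D : DerData r) (a : Fin r) (μ ν : Idx) : Jet r :=
  dUp D μ (vUp a ν) - dUp D ν (vUp a μ)

/-- The lowered field strength `F_{aμν} := η_{μρ} η_{νσ} F_a^{ρσ}`. -/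
def Fdd (D : DerData r) (a : Fin r) (μ ν : Idx) : Jet r :=
  ∑ ρ : Idx, ∑ s : Idx, (η μ ρ * η ν s) • Fuu D a ρ s

variable (D : DerData r) (f : Fin r → Fin r → Fin r → ℝ)

/-- The Yang-Mills interaction Lagrangian
`T := f_{abc}(½ v_{aμ} v_{bν} F_c^{νμ} + u_a v_b^μ (d_μ ũ_c))`. -/
def Tint : Jet r :=
  ∑ a : Fin r, ∑ b : Fin r, ∑ c : Fin r, ((f a b c : ℝ) : ℂ) •
    ((2⁻¹ : ℂ) • ∑ μ : Idx, ∑ ν : Idx, vGen a μ 0 * vGen b ν 0 * Fuu D c ν μ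
      + ∑ μ : Idx, uGen a 0 * vUp b μ * D.d μ (utGen c 0))

/-- `T^μ := f_{abc}(u_a v_{bν} F_c^{νμ} - ½ u_a u_b (d^μ ũ_c))`. -/
def Tup (μ : Idx) : Jet r :=
  ∑ a : Fin r, ∑ b : Fin r, ∑ c : Fin r, ((f a b c : ℝ) : ℂ) •
    (∑ ν : Idx, uGen a 0 * vGen b ν 0 * Fuu D c ν μ
      - (2⁻¹ : ℂ) • (uGen a 0 * uGen b 0 * dUp D μ (utGen c 0)))

/-- `T^{μν} := ½ f_{abc} u_a u_b F_c^{μν}`. -/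
def Tupup (μ ν : Idx) : Jet r :=
  (2⁻¹ : ℂ) • ∑ a : Fin r, ∑ b : Fin r, ∑ c : Fin r, ((f a b c : ℝ) : ℂ) •
    (uGen a 0 * uGen b 0 * Fuu D c μ ν)

/-- The Wick submonomial `B_{aμ} := -f_{abc} u_b v_{cμ}`. -/
def Bdn (a : Fin r) (μ : Idx) : Jet r :=
  ∑ b : Fin r, ∑ c : Fin r, (-((f a b c : ℝ) : ℂ)) • (uGen b 0 * vGen c μ 0)

/-- `B_a^μ := η^{μν} B_{aν}`. -/
def Bup (a : Fin r) (μ : Idx) : Jet r := ∑ ν : Idx, η μ ν • Bdn f a ν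

/-- The Wick submonomial `C_{aμ} := f_{abc}(v_b^ν F_{cνμ} - u_b (d_μ ũ_c))`. -/
def Cdn (a : Fin r) (μ : Idx) : Jet r :=
  ∑ b : Fin r, ∑ c : Fin r, ((f a b c : ℝ) : ℂ) •
    (∑ ν : Idx, vUp b ν * Fdd D c ν μ - uGen b 0 * D.d μ (utGen c 0))

/-- `C_a^μ := η^{μν} C_{aν}`. -/
def Cup (a : Fin r) (μ : Idx) : Jet r := ∑ ν : Idx, η μ ν • Cdn D f a ν

/-- The Wick submonomial `D_a := f_{abc} v_b^μ (d_μ ũ_c)`. -/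
def Dgh (a : Fin r) : Jet r :=
  ∑ b : Fin r, ∑ c : Fin r, ((f a b c : ℝ) : ℂ) •
    ∑ μ : Idx, vUp b μ * D.d μ (utGen c 0)

/-- The Wick submonomial `E_{aμν} := f_{abc} v_{bμ} v_{cν}`. -/
def Edd (a : Fin r) (μ ν : Idx) : Jet r :=
  ∑ b : Fin r, ∑ c : Fin r, ((f a b c : ℝ) : ℂ) • (vGen b μ 0 * vGen c ν 0)

/-- `E_a^{μν} := η^{μρ} η^{νσ} E_{aρσ}`. -/
def Euu (a : Fin r) (μ ν : Idx) : Jet r :=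
  ∑ ρ : Idx, ∑ s : Idx, (η μ ρ * η ν s) • Edd f a ρ s

/-- The Wick submonomial `C_{aμν} := -f_{abc} u_b F_{cμν}`. -/
def Cdd (a : Fin r) (μ ν : Idx) : Jet r :=
  ∑ b : Fin r, ∑ c : Fin r, (-((f a b c : ℝ) : ℂ)) • (uGen b 0 * Fdd D c μ ν)

/-- `C_a^{μν} := η^{μρ} η^{νσ} C_{aρσ}`. -/
def Cuu (a : Fin r) (μ ν : Idx) : Jet r :=
  ∑ ρ : Idx, ∑ s : Idx, (η μ ρ * η ν s) • Cdd D f a ρ s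

/-- The Wick submonomial `B_a := ½ f_{abc} u_b u_c`. -/
def Bgh (a : Fin r) : Jet r :=
  (2⁻¹ : ℂ) • ∑ b : Fin r, ∑ c : Fin r, ((f a b c : ℝ) : ℂ) • (uGen b 0 * uGen c 0)
section MyAux

variable {r : ℕ}

lemma my_u_mul_u_swap (b c : Fin r) (M N : Multiset Idx) :
    uGen b M * uGen c N = -(uGen c N * uGen b M) := by
  simp only [uGen, Algebra.TensorProduct.tmul_mul_tmul, one_mul, ← TensorProduct.tmul_neg]
  congr 1
  exact eq_neg_of_add_eq_zero_left (ExteriorAlgebra.ι_add_mul_swap _ _)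

lemma my_prod_norm (b c d e : Fin r) (ρ σ : Idx) :
    (uGen b 0 * vGen c ρ 0) * (uGen d 0 * vGen e σ 0)
      = uGen b 0 * uGen d 0 * (vGen c ρ 0 * vGen e σ 0) := by
  simp only [uGen, vGen, Algebra.TensorProduct.tmul_mul_tmul, one_mul, mul_one]

lemma my_sum_comm5 {M : Type*} [AddCommMonoid M] {n : ℕ}
    (H : Fin n → Fin n → Fin n → Fin n → Fin n → M) :
    ∑ a, ∑ b, ∑ c, ∑ d, ∑ e, H a b c d e
      = ∑ b, ∑ c, ∑ d, ∑ e, ∑ a, H a b c d e := by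
  rw [Finset.sum_comm]
  refine Finset.sum_congr rfl fun b _ => ?_
  rw [Finset.sum_comm]
  refine Finset.sum_congr rfl fun c _ => ?_
  rw [Finset.sum_comm]
  exact Finset.sum_congr rfl fun d _ => Finset.sum_comm

end MyAux
lemma my_main_core {M : Type*} [AddCommGroup M] [Module ℂ M] {n : ℕ}
    (g₁ g₂ : Fin n → Fin n → Fin n → Fin n → Fin n → ℂ)
    (P : Fin n → Fin n → Fin n → Fin n → M)
    (hP : ∀ b c d e, P c b d e = - P b c d e)
    (key : ∀ b c d e, ∑ a, (g₁ a b c d e - g₁ a c b d e)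
        = ∑ a, (g₂ a b c d e - g₂ a c b d e)) :
    ∑ a, ∑ b, ∑ c, ∑ d, ∑ e, g₁ a b c d e • P b c d e
      = ∑ a, ∑ b, ∑ c, ∑ d, ∑ e, g₂ a b c d e • P b c d e := by
  have double : ∀ g : Fin n → Fin n → Fin n → Fin n → Fin n → ℂ,
      (2 : ℂ) • (∑ a, ∑ b, ∑ c, ∑ d, ∑ e, g a b c d e • P b c d e)
        = ∑ b, ∑ c, ∑ d, ∑ e, (∑ a, (g a b c d e - g a c b d e)) • P b c d e := by
    intro g
    have swapped : (∑ a, ∑ b, ∑ c, ∑ d, ∑ e, g a b c d e • P b c d e)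
        = ∑ a : Fin n, ∑ b, ∑ c, ∑ d, ∑ e, (- g a c b d e) • P b c d e := by
      refine Finset.sum_congr rfl fun a _ => ?_
      rw [Finset.sum_comm]
      refine Finset.sum_congr rfl fun b _ => Finset.sum_congr rfl fun c _ =>
        Finset.sum_congr rfl fun d _ => Finset.sum_congr rfl fun e _ => ?_
      rw [hP, smul_neg, ← neg_smul]
    rw [two_smul]
    nth_rewrite 2 [swapped]
    simp only [← Finset.sum_add_distrib, ← add_smul, ← sub_eq_add_neg]
    rw [my_sum_comm5]
    simp only [Finset.sum_smul]
  have hXY : (∑ b, ∑ c, ∑ d, ∑ e, (∑ a, (g₁ a b c d e - g₁ a c b d e)) • P b c d e)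
      = ∑ b, ∑ c, ∑ d, ∑ e, (∑ a, (g₂ a b c d e - g₂ a c b d e)) • P b c d e :=
    Finset.sum_congr rfl fun b _ => Finset.sum_congr rfl fun c _ =>
      Finset.sum_congr rfl fun d _ => Finset.sum_congr rfl fun e _ => by rw [key]
  have h : (2 : ℂ) • (∑ a, ∑ b, ∑ c, ∑ d, ∑ e, g₁ a b c d e • P b c d e)
      = (2 : ℂ) • (∑ a, ∑ b, ∑ c, ∑ d, ∑ e, g₂ a b c d e • P b c d e) :=
    (double g₁).trans (hXY.trans (double g₂).symm)
  have h' := congrArg (fun x : M => (2⁻¹ : ℂ) • x) h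
  simpa [smul_smul, show (2⁻¹ : ℂ) * 2 = 1 by norm_num] using h'
lemma my_swap_inner {M : Type*} [AddCommMonoid M] {n : ℕ}
    (H : Fin n → Fin n → Fin n → Fin n → M) :
    ∑ a, ∑ b, ∑ c, ∑ d, H a b c d = ∑ c, ∑ d, ∑ a, ∑ b, H a b c d := by
  have h1 : ∀ a, ∑ b, ∑ c, ∑ d, H a b c d = ∑ c, ∑ d, ∑ b, H a b c d := fun a => by
    rw [Finset.sum_comm]
    exact Finset.sum_congr rfl fun c _ => Finset.sum_comm
  calc ∑ a, ∑ b, ∑ c, ∑ d, H a b c d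
      = ∑ a, ∑ c, ∑ d, ∑ b, H a b c d := Finset.sum_congr rfl fun a _ => h1 a
    _ = ∑ c, ∑ a, ∑ d, ∑ b, H a b c d := Finset.sum_comm
    _ = ∑ c, ∑ d, ∑ a, ∑ b, H a b c d := Finset.sum_congr rfl fun c _ => Finset.sum_comm

lemma my_core (f : Fin r → Fin r → Fin r → ℝ)
    (hf₂ : ∀ a b c, f a b c = - f a c b)
    (hJac : ∀ a b c d : Fin r,
      (∑ e : Fin r, (f e a b * f e c d + f e b c * f e a d + f e c a * f e b d)) = 0)
    (ρ σ : Idx) :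
    ∑ a, Bgh f a * Edd f a ρ σ = ∑ a, Bdn f a ρ * Bdn f a σ := by
  simp only [Bgh, Edd, Bdn, Finset.smul_sum, Finset.sum_mul, Finset.mul_sum,
    smul_mul_assoc, mul_smul_comm, smul_smul, neg_mul, mul_neg, neg_neg, neg_smul,
    my_prod_norm]
  have hL : (∑ x : Fin r, ∑ x1 : Fin r, ∑ x2 : Fin r, ∑ x3 : Fin r, ∑ x4 : Fin r,
        (((f x x1 x2 : ℝ) : ℂ) * (2⁻¹ * ((f x x3 x4 : ℝ) : ℂ))) •
          (uGen x3 0 * uGen x4 0 * (vGen x1 ρ 0 * vGen x2 σ 0)))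
      = ∑ a : Fin r, ∑ b : Fin r, ∑ c : Fin r, ∑ d : Fin r, ∑ e : Fin r,
        (((f a d e : ℝ) : ℂ) * (2⁻¹ * ((f a b c : ℝ) : ℂ))) •
          (uGen b 0 * uGen c 0 * (vGen d ρ 0 * vGen e σ 0)) :=
    Finset.sum_congr rfl fun x _ => my_swap_inner _
  have hR : (∑ x : Fin r, ∑ x1 : Fin r, ∑ x2 : Fin r, ∑ x3 : Fin r, ∑ x4 : Fin r,
        (((f x x1 x2 : ℝ) : ℂ) * ((f x x3 x4 : ℝ) : ℂ)) •
          (uGen x3 0 * uGen x1 0 * (vGen x4 ρ 0 * vGen x2 σ 0)))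
      = ∑ a : Fin r, ∑ b : Fin r, ∑ c : Fin r, ∑ d : Fin r, ∑ e : Fin r,
        (((f a c e : ℝ) : ℂ) * ((f a b d : ℝ) : ℂ)) •
          (uGen b 0 * uGen c 0 * (vGen d ρ 0 * vGen e σ 0)) :=
    Finset.sum_congr rfl fun x _ =>
      (my_swap_inner _).trans (Finset.sum_congr rfl fun x3 _ => Finset.sum_comm)
  rw [hL, hR]
  refine my_main_core
    (fun a b c d e => ((f a d e : ℝ) : ℂ) * (2⁻¹ * ((f a b c : ℝ) : ℂ)))
    (fun a b c d e => ((f a c e : ℝ) : ℂ) * ((f a b d : ℝ) : ℂ))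
    (fun b c d e => uGen b 0 * uGen c 0 * (vGen d ρ 0 * vGen e σ 0))
    (fun b c d e => by
      show uGen c 0 * uGen b 0 * (vGen d ρ 0 * vGen e σ 0)
        = -(uGen b 0 * uGen c 0 * (vGen d ρ 0 * vGen e σ 0))
      rw [my_u_mul_u_swap c b]; exact neg_mul (uGen b 0 * uGen c 0) (vGen d ρ 0 * vGen e σ 0))
    (fun b c d e => ?_)
  -- scalar key
  beta_reduce
  have hreal : ∑ a : Fin r, (f a d e * f a b c)
      = ∑ a : Fin r, (f a c e * f a b d - f a b e * f a c d) := by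
    have h2 : ∑ a : Fin r, (f a d e * f a b c - (f a c e * f a b d - f a b e * f a c d))
        = 0 := by
      rw [← hJac c d b e]
      exact Finset.sum_congr rfl fun x _ => by
        rw [hf₂ x d b]; ring
    rwa [Finset.sum_sub_distrib, sub_eq_zero] at h2
  calc ∑ a : Fin r, (((f a d e : ℝ) : ℂ) * (2⁻¹ * ((f a b c : ℝ) : ℂ))
          - ((f a d e : ℝ) : ℂ) * (2⁻¹ * ((f a c b : ℝ) : ℂ)))
      = ((∑ a : Fin r, (f a d e * f a b c) : ℝ) : ℂ) := by
        push_cast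
        refine Finset.sum_congr rfl fun x _ => ?_
        rw [hf₂ x c b]; push_cast; ring
    _ = ((∑ a : Fin r, (f a c e * f a b d - f a b e * f a c d) : ℝ) : ℂ) := by
        rw [hreal]
    _ = ∑ a : Fin r, (((f a c e : ℝ) : ℂ) * ((f a b d : ℝ) : ℂ)
          - ((f a b e : ℝ) : ℂ) * ((f a c d : ℝ) : ℂ)) := by
        push_cast; ring
lemma my_sum_comm3 {M : Type*} [AddCommMonoid M] {α β γ : Type*}
    [Fintype α] [Fintype β] [Fintype γ]
    (H : α → β → γ → M) :
    ∑ a, ∑ b, ∑ c, H a b c = ∑ b, ∑ c, ∑ a, H a b c := by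
  rw [Finset.sum_comm]
  exact Finset.sum_congr rfl fun b _ => Finset.sum_comm

/-- If the structure constants satisfy the Jacobi identity, then
`B_a E_a^{μν} = B_a^μ B_a^ν` for all `μ,ν`; equivalently
`N(T^{μν},T) = -N(T^μ,T^ν)` where `N(T^{μν},T) := -i B_a E_a^{μν}` and
`N(T^μ,T^ν) := i B_a^μ B_a^ν`. -/
theorem BE_eq_BB_of_jacobi
    (r : ℕ) (hr : 1 ≤ r) (f : Fin r → Fin r → Fin r → ℝ)
    (hf₁ : ∀ a b c, f a b c = - f b a c) (hf₂ : ∀ a b c, f a b c = - f a c b)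
    (hJac : ∀ a b c d : Fin r,
      (∑ e : Fin r, (f e a b * f e c d + f e b c * f e a d + f e c a * f e b d)) = 0) :
    (∀ μ ν : Idx,
        (∑ a : Fin r, Bgh f a * Euu f a μ ν) = ∑ a : Fin r, Bup f a μ * Bup f a ν) ∧
    (∀ μ ν : Idx,
        ((-Complex.I) • ∑ a : Fin r, Bgh f a * Euu f a μ ν : Jet r)
          = - (Complex.I • ∑ a : Fin r, Bup f a μ * Bup f a ν)) := by
  have main : ∀ μ ν : Idx,
      (∑ a : Fin r, Bgh f a * Euu f a μ ν) = ∑ a : Fin r, Bup f a μ * Bup f a ν := by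
    intro μ ν
    simp only [Euu, Bup, Finset.mul_sum, Finset.sum_mul, mul_smul_comm, smul_mul_assoc,
      smul_smul, Finset.smul_sum]
    have h1 : ∑ x : Fin r, ∑ x1 : Idx, ∑ x2 : Idx,
          (η μ x1 * η ν x2) • (Bgh f x * Edd f x x1 x2)
        = ∑ x1 : Idx, ∑ x2 : Idx, ∑ x : Fin r,
          (η μ x1 * η ν x2) • (Bgh f x * Edd f x x1 x2) := my_sum_comm3 _
    have h2 : ∑ x : Fin r, ∑ x1 : Idx, ∑ x2 : Idx,
          (η ν x1 * η μ x2) • (Bdn f x x2 * Bdn f x x1)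
        = ∑ x1 : Idx, ∑ x2 : Idx, ∑ x : Fin r,
          (η ν x1 * η μ x2) • (Bdn f x x2 * Bdn f x x1) := my_sum_comm3 _
    have h3 : ∑ x1 : Idx, ∑ x2 : Idx, ∑ x : Fin r,
          (η ν x1 * η μ x2) • (Bdn f x x2 * Bdn f x x1)
        = ∑ x1 : Idx, ∑ x2 : Idx, ∑ x : Fin r,
          (η ν x2 * η μ x1) • (Bdn f x x1 * Bdn f x x2) := Finset.sum_comm
    rw [h1, h2, h3]
    refine Finset.sum_congr rfl fun ρ _ => Finset.sum_congr rfl fun s _ => ?_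
    rw [← Finset.smul_sum, ← Finset.smul_sum, my_core f hf₂ hJac ρ s,
      mul_comm (η ν s) (η μ ρ)]
  refine ⟨main, fun μ ν => ?_⟩
  rw [main μ ν]
  exact neg_smul Complex.I (∑ a : Fin r, Bup f a μ * Bup f a ν)

end
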